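/- The set E = { ∑_{i∈s} 4^{-i} : s a finite nonempty set of positive integers } is nowhere dense in ℝ, and E is order-isomorphic to ℚ (with the order inherited from ℝ). -/

import Mathlib

open Finset

/-- `E`: the numbers `∑_{i ∈ s} 4⁻ⁱ` for a finite nonempty set `s` of positive
integers, i.e. the numbers in `(0,1)` with a finite binary expansion in which
every odd-numbered binary digit is `0`. -/
def quarticSet : Set ℝ :=
  {x | ∃ s : Finset ℕ, s.Nonempty ∧ (∀ i ∈ s, 0 < i) ∧ x = ∑ i ∈ s, (1/4 : ℝ) ^ i}

lemma quartic_tail_sum_le (n : ℕ) (u : Finset ℕ) (hu : ∀ i ∈ u, n < i) :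
    ∑ i ∈ u, (1/4:ℝ)^i ≤ (1/4)^n / 3 := by
  classical
  set N := u.sup id + 1 with hN
  have hsub : u ⊆ Finset.Ico (n+1) (max N (n+1)) := by
    intro i hi
    simp only [Finset.mem_Ico]
    refine ⟨hu i hi, lt_max_of_lt_left ?_⟩
    exact Nat.lt_succ_of_le (Finset.le_sup (f := id) hi)
  have h1 : ∑ i ∈ u, (1/4:ℝ)^i ≤ ∑ i ∈ Finset.Ico (n+1) (max N (n+1)), (1/4:ℝ)^i :=
    Finset.sum_le_sum_of_subset_of_nonneg hsub (by intros; positivity)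
  refine h1.trans ?_
  rw [geom_sum_Ico (by norm_num : (1/4:ℝ) ≠ 1) (le_max_right _ _)]
  have h2 : (0:ℝ) ≤ (1/4:ℝ) ^ max N (n+1) := by positivity
  have h3 : ((1/4:ℝ) ^ max N (n+1) - (1/4)^(n+1)) / (1/4 - 1)
      = ((1/4:ℝ)^(n+1) - (1/4) ^ max N (n+1)) / (3/4) := by ring
  rw [h3]
  have h4 : ((1/4:ℝ)^(n+1) - (1/4) ^ max N (n+1)) / (3/4) ≤ (1/4:ℝ)^(n+1) / (3/4) := by
    apply div_le_div_of_nonneg_right ?_ (by norm_num) |>.trans_eq rfl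
    linarith
  refine h4.trans_eq ?_
  rw [pow_succ]
  ring

lemma quartic_pos {x : ℝ} (hx : x ∈ quarticSet) : 0 < x := by
  obtain ⟨s, hne, _, rfl⟩ := hx
  exact Finset.sum_pos (fun i _ => by positivity) hne

lemma quartic_exists_big (ε : ℝ) (hε : 0 < ε) (m0 : ℕ) :
    ∃ m, m0 < m ∧ (1/4:ℝ)^m < ε := by
  obtain ⟨n, hn⟩ := exists_pow_lt_of_lt_one hε (by norm_num : (1/4:ℝ) < 1)
  refine ⟨max n m0 + 1, Nat.lt_succ_of_le (le_max_right _ _), lt_of_le_of_lt ?_ hn⟩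
  exact pow_le_pow_of_le_one (by norm_num) (by norm_num)
    (Nat.le_succ_of_le (le_max_left _ _))

/-- The set `E` is nowhere dense in `ℝ` and is order-isomorphic to `ℚ`: there
is a strictly increasing bijection from `ℚ` onto `E`. -/
theorem quarticSet_nowhereDense_and_rat_order_type :
    IsNowhereDense quarticSet ∧
      ∃ f : ℚ → ℝ, StrictMono f ∧ Set.range f = quarticSet := by
  classical
  constructor
  · -- nowhere dense
    -- closure is contained in K n, a finite union of short closed intervals
    set K : ℕ → Set ℝ := fun n =>
      ⋃ s ∈ (Finset.Icc 1 n).powerset,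
        Set.Icc (∑ i ∈ s, (1/4:ℝ)^i) ((∑ i ∈ s, (1/4:ℝ)^i) + (1/4)^n/3) with hK
    have hEK : ∀ n, quarticSet ⊆ K n := by
      intro n x hx
      obtain ⟨t, _, hpos, rfl⟩ := hx
      set s := t.filter (fun i => i ≤ n) with hs
      have hsmem : s ∈ (Finset.Icc 1 n).powerset := by
        simp only [Finset.mem_powerset]
        intro i hi
        rw [hs, Finset.mem_filter] at hi
        exact Finset.mem_Icc.2 ⟨hpos i hi.1, hi.2⟩
      have hsplit : ∑ i ∈ s, (1/4:ℝ)^i + ∑ i ∈ t.filter (fun i => ¬ i ≤ n), (1/4:ℝ)^i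
          = ∑ i ∈ t, (1/4:ℝ)^i := Finset.sum_filter_add_sum_filter_not t _ _
      have htail : ∑ i ∈ t.filter (fun i => ¬ i ≤ n), (1/4:ℝ)^i ≤ (1/4)^n/3 :=
        quartic_tail_sum_le n _ (fun i hi => by
          have := (Finset.mem_filter.1 hi).2; omega)
      have htail0 : 0 ≤ ∑ i ∈ t.filter (fun i => ¬ i ≤ n), (1/4:ℝ)^i :=
        Finset.sum_nonneg (fun i _ => by positivity)
      refine Set.mem_biUnion hsmem ?_
      constructor <;> linarith
    have hKclosed : ∀ n, IsClosed (K n) := by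
      intro n
      apply Set.Finite.isClosed_biUnion ((Finset.Icc 1 n).powerset.finite_toSet)
      intro s _
      exact isClosed_Icc
    have hclosK : ∀ n, closure quarticSet ⊆ K n :=
      fun n => closure_minimal (hEK n) (hKclosed n)
    have hvol : ∀ n, MeasureTheory.volume (closure quarticSet)
        ≤ ENNReal.ofReal ((1/2:ℝ)^n / 3) := by
      intro n
      refine (MeasureTheory.measure_mono (hclosK n)).trans ?_
      refine (MeasureTheory.measure_biUnion_finset_le _ _).trans ?_
      have hvI : ∀ s : Finset ℕ, MeasureTheory.volume
          (Set.Icc (∑ i ∈ s, (1/4:ℝ)^i) ((∑ i ∈ s, (1/4:ℝ)^i) + (1/4)^n/3))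
          = ENNReal.ofReal ((1/4:ℝ)^n/3) := by
        intro s
        rw [Real.volume_Icc]
        congr 1
        ring
      refine le_of_eq ?_
      calc ∑ s ∈ (Finset.Icc 1 n).powerset, MeasureTheory.volume
            (Set.Icc (∑ i ∈ s, (1/4:ℝ)^i) ((∑ i ∈ s, (1/4:ℝ)^i) + (1/4)^n/3))
          = (Finset.Icc 1 n).powerset.card • ENNReal.ofReal ((1/4:ℝ)^n/3) := by
            rw [Finset.sum_congr rfl (fun s _ => hvI s), Finset.sum_const]
        _ = ENNReal.ofReal ((1/2:ℝ)^n / 3) := by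
            rw [Finset.card_powerset, Nat.card_Icc]
            simp only [nsmul_eq_mul]
            rw [← ENNReal.ofReal_natCast, ← ENNReal.ofReal_mul (by positivity)]
            congr 1
            push_cast
            have h4 : (4:ℝ)^n = 2^n * 2^n := by rw [← mul_pow]; norm_num
            rw [show ((1:ℝ)/2)^n = 1/2^n from by rw [div_pow, one_pow],
                show ((1:ℝ)/4)^n = 1/4^n from by rw [div_pow, one_pow]]
            rw [h4]
            field_simp
    have hvol0 : MeasureTheory.volume (closure quarticSet) = 0 := by
      have htend : Filter.Tendsto (fun n : ℕ => ENNReal.ofReal ((1/2:ℝ)^n / 3))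
          Filter.atTop (nhds 0) := by
        have : Filter.Tendsto (fun n : ℕ => ((1/2:ℝ)^n / 3)) Filter.atTop (nhds 0) := by
          have := tendsto_pow_atTop_nhds_zero_of_lt_one
            (by norm_num : (0:ℝ) ≤ 1/2) (by norm_num : (1/2:ℝ) < 1)
          simpa using this.div_const 3
        have h := ENNReal.tendsto_ofReal this
        simpa using h
      exact le_antisymm (ge_of_tendsto' htend hvol) (zero_le)
    rw [IsNowhereDense]
    by_contra h
    have hne : (interior (closure quarticSet)).Nonempty := Set.nonempty_iff_ne_empty.2 h
    have := MeasureTheory.Measure.measure_pos_of_nonempty_interior MeasureTheory.volume hne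
    rw [hvol0] at this
    exact lt_irrefl _ this
  · -- order type
    haveI hcount : Countable ↥quarticSet := by
      have hsub : quarticSet ⊆ Set.range (fun s : Finset ℕ => ∑ i ∈ s, (1/4:ℝ)^i) := by
        rintro x ⟨s, _, _, rfl⟩; exact ⟨s, rfl⟩
      exact ((Set.countable_range _).mono hsub).to_subtype
    haveI hne : Nonempty ↥quarticSet := by
      refine ⟨⟨(1/4:ℝ), {1}, Finset.singleton_nonempty 1, ?_, ?_⟩⟩
      · intro i hi; rw [Finset.mem_singleton] at hi; omega
      · rw [Finset.sum_singleton, pow_one]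
    -- helper : adding a new big index
    have hadd : ∀ (x : ℝ), x ∈ quarticSet → ∀ ε > 0, ∃ z ∈ quarticSet, x < z ∧ z < x + ε := by
      rintro x ⟨s, hsne, hspos, rfl⟩ ε hε
      obtain ⟨m, hm1, hm2⟩ := quartic_exists_big ε hε (s.sup id)
      have hms : m ∉ s := by
        intro h
        have := Finset.le_sup (f := id) h
        simp only [id] at this
        omega
      refine ⟨∑ i ∈ insert m s, (1/4:ℝ)^i, ⟨insert m s, Finset.insert_nonempty _ _, ?_, rfl⟩, ?_, ?_⟩
      · intro i hi
        rcases Finset.mem_insert.1 hi with rfl | hi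
        · have : 0 < s.sup id + 1 := Nat.succ_pos _
          omega
        · exact hspos i hi
      · rw [Finset.sum_insert hms]
        have : (0:ℝ) < (1/4)^m := by positivity
        linarith
      · rw [Finset.sum_insert hms]
        linarith
    haveI : DenselyOrdered ↥quarticSet := by
      constructor
      rintro ⟨x, hx⟩ ⟨y, hy⟩ hxy
      rw [Subtype.mk_lt_mk] at hxy
      obtain ⟨z, hz, hxz, hzy⟩ := hadd x hx (y - x) (by linarith)
      exact ⟨⟨z, hz⟩, Subtype.mk_lt_mk.2 hxz, Subtype.mk_lt_mk.2 (by linarith)⟩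
    haveI : NoMaxOrder ↥quarticSet := by
      constructor
      rintro ⟨x, hx⟩
      obtain ⟨z, hz, hxz, _⟩ := hadd x hx 1 one_pos
      exact ⟨⟨z, hz⟩, Subtype.mk_lt_mk.2 hxz⟩
    haveI : NoMinOrder ↥quarticSet := by
      constructor
      rintro ⟨x, hx⟩
      have hx0 : 0 < x := quartic_pos hx
      obtain ⟨m, hm1, hm2⟩ := quartic_exists_big x hx0 0
      refine ⟨⟨(1/4:ℝ)^m, ⟨{m}, Finset.singleton_nonempty m, ?_, ?_⟩⟩, Subtype.mk_lt_mk.2 hm2⟩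
      · intro i hi; rw [Finset.mem_singleton] at hi; omega
      · rw [Finset.sum_singleton]
    obtain ⟨e⟩ := Order.iso_of_countable_dense ℚ ↥quarticSet
    refine ⟨fun q => (e q : ℝ), ?_, ?_⟩
    · intro a b hab
      exact Subtype.coe_lt_coe.2 (e.strictMono hab)
    · have : (fun q : ℚ => ((e q : ℝ))) = Subtype.val ∘ e := rfl
      rw [this, Set.range_comp, e.surjective.range_eq, Set.image_univ, Subtype.range_coe]
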